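/- Let Φ be an ortho-additive range-contractive map on a von Neumann algebra M, and let P be a projection in M with P ≼ I−P (P is Murray–von Neumann subequivalent to I−P). Then for every A ∈ M and every B ∈ PMP, Φ(BA) = B·Φ(A). In particular, Φ(B) = B·Φ(I) for every B ∈ PMP. -/

import Mathlib

noncomputable section

namespace Stmt11

variable {H : Type*} [NormedAddCommGroup H] [InnerProductSpace ℂ H] [CompleteSpace H]

/-- The range projection of a bounded operator: the orthogonal projection of `H` onto the
closure of the range of `A` (equivalently, the smallest projection `P` with `P * A = A`). -/
noncomputable def rangeProjection (A : H →L[ℂ] H) : H →L[ℂ] H :=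
  haveI : CompleteSpace ((LinearMap.range (A : H →ₗ[ℂ] H)).topologicalClosure : Submodule ℂ H) :=
    (Submodule.isClosed_topologicalClosure _).completeSpace_coe
  (LinearMap.range (A : H →ₗ[ℂ] H)).topologicalClosure.subtypeL ∘L
    Submodule.orthogonalProjectionOnto (LinearMap.range (A : H →ₗ[ℂ] H)).topologicalClosure

/-- The order on projections: `P ≤ Q` iff `P * Q = P`. -/
def projLE (P Q : H →L[ℂ] H) : Prop := P * Q = P

/-- `Φ` is an ortho-additive map on `M`: it is additive on pairs of orthogonal elements. -/
def OrthoAdditive (M : VonNeumannAlgebra H) (Φ : (H →L[ℂ] H) → (H →L[ℂ] H)) : Prop :=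
  ∀ A ∈ M, ∀ B ∈ M, star A * B = 0 → Φ (A + B) = Φ A + Φ B

/-- `Φ` is a range-contractive map on `M`: `R(Φ A) ≤ R(A)` for all `A ∈ M`. -/
def RangeContractive (M : VonNeumannAlgebra H) (Φ : (H →L[ℂ] H) → (H →L[ℂ] H)) : Prop :=
  ∀ A ∈ M, projLE (rangeProjection (Φ A)) (rangeProjection A)

/-- `P` is Murray–von Neumann subequivalent to `Q` in `M`: there is a partial isometry
`V ∈ M` with `V*V = P` and `VV* ≤ Q`. -/
def MvNSubEquiv (M : VonNeumannAlgebra H) (P Q : H →L[ℂ] H) : Prop :=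
  ∃ V ∈ M, star V * V = P ∧ (V * star V) * Q = V * star V

lemma rp_mul_self (A : H →L[ℂ] H) : rangeProjection A * A = A := by
  haveI : CompleteSpace ((LinearMap.range (A : H →ₗ[ℂ] H)).topologicalClosure : Submodule ℂ H) :=
    (Submodule.isClosed_topologicalClosure _).completeSpace_coe
  ext x
  have hmem : A x ∈ (LinearMap.range (A : H →ₗ[ℂ] H)).topologicalClosure :=
    Submodule.le_topologicalClosure _ (LinearMap.mem_range_self _ x)
  show ((LinearMap.range (A : H →ₗ[ℂ] H)).topologicalClosure.subtypeL ∘L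
      Submodule.orthogonalProjectionOnto (LinearMap.range (A : H →ₗ[ℂ] H)).topologicalClosure) (A x) = A x
  exact Submodule.starProjection_eq_self_iff.mpr hmem

lemma rp_star (A : H →L[ℂ] H) : star (rangeProjection A) = rangeProjection A := by
  haveI : CompleteSpace ((LinearMap.range (A : H →ₗ[ℂ] H)).topologicalClosure : Submodule ℂ H) :=
    (Submodule.isClosed_topologicalClosure _).completeSpace_coe
  exact isSelfAdjoint_starProjection (LinearMap.range (A : H →ₗ[ℂ] H)).topologicalClosure

lemma mul_rp_eq_zero {T A : H →L[ℂ] H} (h : T * A = 0) : T * rangeProjection A = 0 := by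
  haveI : CompleteSpace ((LinearMap.range (A : H →ₗ[ℂ] H)).topologicalClosure : Submodule ℂ H) :=
    (Submodule.isClosed_topologicalClosure _).completeSpace_coe
  have hker : (LinearMap.range (A : H →ₗ[ℂ] H)).topologicalClosure ≤ LinearMap.ker (T : H →ₗ[ℂ] H) := by
    apply Submodule.topologicalClosure_minimal
    · rintro y ⟨z, rfl⟩
      have : T (A z) = (T * A) z := rfl
      simp [LinearMap.mem_ker, this, h]
    · exact ContinuousLinearMap.isClosed_ker T
  ext x
  show T (((LinearMap.range (A : H →ₗ[ℂ] H)).topologicalClosure.subtypeL ∘L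
      Submodule.orthogonalProjectionOnto (LinearMap.range (A : H →ₗ[ℂ] H)).topologicalClosure) x) = (0 : H →L[ℂ] H) x
  have := hker (Submodule.orthogonalProjectionOnto (LinearMap.range (A : H →ₗ[ℂ] H)).topologicalClosure x).2
  simpa using this

/-- Let `Φ` be an ortho-additive range-contractive map on `M` and let
`P ∈ M` be a projection with `P ≼ I - P`. Then `Φ (B A) = B (Φ A)` for all `A ∈ M` and
`B ∈ PMP`; in particular `Φ B = B (Φ 1)` for all `B ∈ PMP`. -/
theorem stmt11 (M : VonNeumannAlgebra H)
    (Φ : (H →L[ℂ] H) → (H →L[ℂ] H))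
    (hmaps : ∀ A ∈ M, Φ A ∈ M)
    (hadd : OrthoAdditive M Φ)
    (hrc : RangeContractive M Φ)
    (P : H →L[ℂ] H) (hP : P ∈ M) (hPproj : P * P = P) (hPsa : star P = P)
    (hsub : MvNSubEquiv M P (1 - P)) :
    (∀ A ∈ M, ∀ B ∈ M, P * B * P = B → Φ (B * A) = B * Φ A) ∧
    (∀ B ∈ M, P * B * P = B → Φ B = B * Φ 1) := by
  obtain ⟨V, hVM, hVV, hVle⟩ := hsub
  -- consequences of range-contractivity
  have hrc' : ∀ X ∈ M, rangeProjection X * Φ X = Φ X := by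
    intro X hX
    have h1 : rangeProjection (Φ X) * rangeProjection X = rangeProjection (Φ X) := hrc X hX
    have h2 : rangeProjection X * rangeProjection (Φ X) = rangeProjection (Φ X) := by
      have := congrArg star h1
      rwa [star_mul, rp_star, rp_star] at this
    calc rangeProjection X * Φ X
        = rangeProjection X * (rangeProjection (Φ X) * Φ X) := by rw [rp_mul_self]
      _ = rangeProjection X * rangeProjection (Φ X) * Φ X := by rw [mul_assoc]
      _ = rangeProjection (Φ X) * Φ X := by rw [h2]
      _ = Φ X := rp_mul_self _
  have ann : ∀ X ∈ M, ∀ T : H →L[ℂ] H, T * X = 0 → T * Φ X = 0 := by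
    intro X hX T hT
    calc T * Φ X = T * (rangeProjection X * Φ X) := by rw [hrc' X hX]
      _ = T * rangeProjection X * Φ X := by rw [mul_assoc]
      _ = 0 := by rw [mul_rp_eq_zero hT, zero_mul]
  -- algebraic facts about V and P
  have hVVP : V * star V * P = 0 := by
    have h := hVle
    rw [mul_sub, mul_one, sub_eq_self] at h
    exact h
  have hVP : V * P = V := by
    have hVVx : ∀ X : H →L[ℂ] H, star V * (V * X) = P * X := fun X => by
      rw [← mul_assoc, hVV]
    have h0 : star (V - V * P) * (V - V * P) = 0 := by
      simp only [star_sub, star_mul, hPsa, sub_mul, mul_sub, mul_assoc, hVVx, hVV, hPproj]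
      simp
    have h1 := (CStarRing.star_mul_self_eq_zero_iff (V - V * P)).mp h0
    rw [sub_eq_zero] at h1
    exact h1.symm
  have hPVV : P * (V * star V) = 0 := by
    have := congrArg star hVVP
    simp only [star_mul, star_star, hPsa, star_zero, mul_assoc] at this
    exact this
  have hPV : P * V = 0 := by
    calc P * V = P * (V * P) := by rw [hVP]
      _ = P * (V * (star V * V)) := by rw [hVV]
      _ = P * (V * star V) * V := by rw [← mul_assoc V (star V) V, ← mul_assoc]
      _ = 0 := by rw [hPVV, zero_mul]
  have hVstP : star V * P = 0 := by
    have := congrArg star hPV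
    rwa [star_mul, hPsa, star_zero] at this
  -- the key lemma
  have keylem : ∀ A ∈ M, ∀ B ∈ M, P * B * P = B →
      Φ (B * A) = B * (star V * Φ (V * A)) := by
    intro A hA B hB hBP
    have hPB : P * B = B := by
      conv_lhs => rw [← hBP]
      simp only [← mul_assoc]
      rw [hPproj]
      exact hBP
    have hBPr : B * P = B := by
      conv_lhs => rw [← hBP]
      rw [mul_assoc, hPproj]
      exact hBP
    have hstarBP : star B * P = star B := by
      have := congrArg star hPB
      rwa [star_mul, hPsa] at this
    have hstarBV : star B * V = 0 := by
      rw [← hstarBP, mul_assoc, hPV, mul_zero]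
    have hVstB : star V * B = 0 := by
      rw [← hPB, ← mul_assoc, hVstP, zero_mul]
    have hBA : B * A ∈ M := mul_mem hB hA
    have hVA : V * A ∈ M := mul_mem hVM hA
    have hCA : (B + V) * A ∈ M := mul_mem (add_mem hB hVM) hA
    have hortho : star (B * A) * (V * A) = 0 := by
      rw [star_mul, mul_assoc, ← mul_assoc (star B) V A, hstarBV, zero_mul, mul_zero]
    have hsum : Φ ((B + V) * A) = Φ (B * A) + Φ (V * A) := by
      rw [add_mul]
      exact hadd (B * A) hBA (V * A) hVA hortho
    have e1 : P * Φ (V * A) = 0 := by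
      refine ann (V * A) hVA P ?_
      rw [← mul_assoc, hPV, zero_mul]
    have e2 : star V * Φ (B * A) = 0 := by
      refine ann (B * A) hBA (star V) ?_
      rw [← mul_assoc, hVstB, zero_mul]
    have e3 : P * Φ (B * A) = Φ (B * A) := by
      have h := ann (B * A) hBA (1 - P) ?_
      · rw [sub_mul, one_mul, sub_eq_zero] at h
        exact h.symm
      · rw [sub_mul, one_mul, ← mul_assoc, hPB, sub_self]
    have hTC : (P - B * star V) * (B + V) = 0 := by
      rw [sub_mul, mul_add, mul_add, hPB, hPV, add_zero,
        mul_assoc, hVstB, mul_zero, zero_add, mul_assoc, hVV, hBPr, sub_self]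
    have e4 : (P - B * star V) * Φ ((B + V) * A) = 0 := by
      refine ann ((B + V) * A) hCA _ ?_
      rw [← mul_assoc, hTC, zero_mul]
    rw [hsum, sub_mul, mul_add, mul_add, e1, e3, add_zero, mul_assoc, e2, mul_zero,
      zero_add, sub_eq_zero, mul_assoc] at e4
    exact e4
  -- Φ (P * A) = P * Φ A
  have hPA : ∀ A ∈ M, Φ (P * A) = P * Φ A := by
    intro A hA
    have h1P : (1 : H →L[ℂ] H) - P ∈ M := sub_mem (one_mem M) hP
    have hPAm : P * A ∈ M := mul_mem hP hA
    have hQAm : ((1 : H →L[ℂ] H) - P) * A ∈ M := mul_mem h1P hA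
    have hdecomp : A = P * A + (1 - P) * A := by
      rw [sub_mul, one_mul, add_sub_cancel]
    have hortho : star (P * A) * ((1 - P) * A) = 0 := by
      rw [star_mul, hPsa, mul_assoc, ← mul_assoc P (1 - P) A, mul_sub, mul_one, hPproj,
        sub_self, zero_mul, mul_zero]
    have hsum2 : Φ A = Φ (P * A) + Φ ((1 - P) * A) := by
      conv_lhs => rw [hdecomp]
      exact hadd (P * A) hPAm ((1 - P) * A) hQAm hortho
    have e5 : P * Φ ((1 - P) * A) = 0 := by
      refine ann _ hQAm P ?_
      rw [← mul_assoc, mul_sub, mul_one, hPproj, sub_self, zero_mul]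
    have e6 : P * Φ (P * A) = Φ (P * A) := by
      have h := ann _ hPAm (1 - P) ?_
      · rw [sub_mul, one_mul, sub_eq_zero] at h
        exact h.symm
      · rw [← mul_assoc, sub_mul, one_mul, hPproj, sub_self, zero_mul]
    rw [hsum2, mul_add, e5, add_zero, e6]
  have hPP : P * P * P = P := by rw [hPproj, hPproj]
  have main : ∀ A ∈ M, ∀ B ∈ M, P * B * P = B → Φ (B * A) = B * Φ A := by
    intro A hA B hB hBP
    have hBPr : B * P = B := by
      conv_lhs => rw [← hBP]
      rw [mul_assoc, hPproj]
      exact hBP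
    calc Φ (B * A) = B * (star V * Φ (V * A)) := keylem A hA B hB hBP
      _ = B * (P * (star V * Φ (V * A))) := by
          rw [← mul_assoc B P, hBPr]
      _ = B * Φ (P * A) := by rw [← keylem A hA P hP hPP]
      _ = B * (P * Φ A) := by rw [hPA A hA]
      _ = B * Φ A := by rw [← mul_assoc, hBPr]
  refine ⟨main, fun B hB hBP => ?_⟩
  have := main 1 (one_mem M) B hB hBP
  rwa [mul_one] at this

end Stmt11
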